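/- The language of a configuration of a timed automaton is invariant under automorphisms fixing the clock reset points and the current time: for a configuration c = (p, μ, now), the language L(A, c) is (μ(X) ∪ {now})-invariant, i.e., π(L(A,c)) = L(A,c) for every timed automorphism π fixing all values in μ(X) ∪ {now}. Moreover if A is always resetting (every transition resets at least one clock), then every reachable configuration satisfies now ∈ μ(X), hence L(A,c) is μ(X)-invariant. -/

import Mathlib

/-- A timed automorphism: a monotone bijection `π : ℝ → ℝ` with `π (x+1) = π x + 1`. -/
def IsTimedAutomorphism (π : ℝ → ℝ) : Prop :=
  Function.Bijective π ∧ StrictMono π ∧ ∀ x : ℝ, π (x + 1) = π x + 1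

/-- An `S`-timed automorphism: a timed automorphism fixing every point of `S`. -/
def IsSTimedAutomorphism (S : Set ℝ) (π : ℝ → ℝ) : Prop :=
  IsTimedAutomorphism π ∧ ∀ t ∈ S, π t = t

/-- A timed word: a finite sequence of letters with nonnegative, nondecreasing timestamps. -/
def IsTimedWord {A : Type*} (w : List (A × ℝ)) : Prop :=
  (∀ p ∈ w, 0 ≤ p.2) ∧ (w.map Prod.snd).Chain' (· ≤ ·)

/-- Pointwise action of a real function on the timestamps of a timed word. -/
def mapTW {A : Type*} (π : ℝ → ℝ) (w : List (A × ℝ)) : List (A × ℝ) :=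
  w.map fun p => (p.1, π p.2)

/-- Comparison operators appearing in clock constraints. -/
inductive CmpOp where
  | lt | le | eq | ge | gt

def CmpOp.holds : CmpOp → ℝ → ℝ → Prop
  | .lt, a, b => a < b
  | .le, a, b => a ≤ b
  | .eq, a, b => a = b
  | .ge, a, b => a ≥ b
  | .gt, a, b => a > b

/-- Clock constraints: Boolean combinations of comparisons of clock values and of
differences of clock values with integer constants. -/
inductive ClockConstraint (X : Type*) where
  | tt : ClockConstraint X
  | ff : ClockConstraint X
  | diff : X → X → CmpOp → ℤ → ClockConstraint X
  | single : X → CmpOp → ℤ → ClockConstraint X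
  | not : ClockConstraint X → ClockConstraint X
  | and : ClockConstraint X → ClockConstraint X → ClockConstraint X
  | or : ClockConstraint X → ClockConstraint X → ClockConstraint X

/-- Satisfaction of a clock constraint by a clock valuation `ν : X → ℝ`. -/
def ClockConstraint.sat {X : Type*} (ν : X → ℝ) : ClockConstraint X → Prop
  | .tt => True
  | .ff => False
  | .diff x y c z => CmpOp.holds c (ν x - ν y) (z : ℝ)
  | .single x c z => CmpOp.holds c (ν x) (z : ℝ)
  | .not φ => ¬ ClockConstraint.sat ν φ
  | .and φ ψ => ClockConstraint.sat ν φ ∧ ClockConstraint.sat ν ψ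
  | .or φ ψ => ClockConstraint.sat ν φ ∨ ClockConstraint.sat ν ψ

/-- All integer constants of the constraint have absolute value at most `m`. -/
def ClockConstraint.constBounded {X : Type*} (m : ℕ) : ClockConstraint X → Prop
  | .tt => True
  | .ff => True
  | .diff _ _ _ z => z.natAbs ≤ m
  | .single _ _ z => z.natAbs ≤ m
  | .not φ => ClockConstraint.constBounded m φ
  | .and φ ψ => ClockConstraint.constBounded m φ ∧ ClockConstraint.constBounded m ψ
  | .or φ ψ => ClockConstraint.constBounded m φ ∧ ClockConstraint.constBounded m ψ

/-- A (nondeterministic) timed automaton over alphabet `A`, locations `Q`, clocks `X`.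
A rule `(p, a, φ, Y, q)` reads letter `a` in location `p`, tests guard `φ`, resets the
clocks in `Y` and moves to location `q`. -/
structure TimedAutomaton (A Q X : Type*) where
  init : Set Q
  final : Set Q
  rules : Set (Q × A × ClockConstraint X × Set X × Q)

/-- A configuration in the reset-point semantics: a location, a reset-point
assignment for the clocks, and the current timestamp. -/
abbrev TAConfig (Q X : Type*) := Q × (X → ℝ) × ℝ

/-- One transition of the reset-point semantics: at time `t ≥ now`, the guard of some
rule is satisfied by the valuation `x ↦ t - μ x`; clocks in the reset set get reset
point `t`, the others keep their reset points. -/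
def TimedAutomaton.Step {A Q X : Type*} (Aut : TimedAutomaton A Q X)
    (c : TAConfig Q X) (e : A × ℝ) (c' : TAConfig Q X) : Prop :=
  c'.2.2 = e.2 ∧ c.2.2 ≤ e.2 ∧
  ∃ φ Y, (c.1, e.1, φ, Y, c'.1) ∈ Aut.rules ∧
    ClockConstraint.sat (fun x => e.2 - c.2.1 x) φ ∧
    (∀ x ∈ Y, c'.2.1 x = e.2) ∧ (∀ x ∉ Y, c'.2.1 x = c.2.1 x)

/-- Runs of a timed automaton over a timed word. -/
inductive TimedAutomaton.Run {A Q X : Type*} (Aut : TimedAutomaton A Q X) :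
    TAConfig Q X → List (A × ℝ) → TAConfig Q X → Prop
  | nil (c : TAConfig Q X) : Aut.Run c [] c
  | cons {c c' c'' : TAConfig Q X} {e : A × ℝ} {w : List (A × ℝ)} :
      Aut.Step c e c' → Aut.Run c' w c'' → Aut.Run c (e :: w) c''

/-- Language of a configuration: timed words admitting an accepting run from it. -/
def TimedAutomaton.LangFrom {A Q X : Type*} (Aut : TimedAutomaton A Q X)
    (c : TAConfig Q X) : Set (List (A × ℝ)) :=
  {w | ∃ c', Aut.Run c w c' ∧ c'.1 ∈ Aut.final}

/-- Language of a timed automaton: union over initial configurations. -/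
def TimedAutomaton.Lang {A Q X : Type*} (Aut : TimedAutomaton A Q X) :
    Set (List (A × ℝ)) :=
  {w | ∃ p ∈ Aut.init, w ∈ Aut.LangFrom (p, fun _ => 0, 0)}

/-- A configuration is reachable if some run from an initial configuration ends in it. -/
def TimedAutomaton.Reachable {A Q X : Type*} (Aut : TimedAutomaton A Q X)
    (c : TAConfig Q X) : Prop :=
  ∃ p ∈ Aut.init, ∃ w, Aut.Run (p, fun _ => 0, 0) w c

/-- Determinism: unique initial location, and two rules from the same location on the
same letter with jointly satisfiable guards agree on resets and target. -/
def TimedAutomaton.IsDeterministic {A Q X : Type*} (Aut : TimedAutomaton A Q X) : Prop :=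
  (∃! p, p ∈ Aut.init) ∧
  ∀ p a φ Y q φ' Y' q', (p, a, φ, Y, q) ∈ Aut.rules → (p, a, φ', Y', q') ∈ Aut.rules →
    (∃ ν : X → ℝ, ClockConstraint.sat ν φ ∧ ClockConstraint.sat ν φ') →
    Y = Y' ∧ q = q'

/-- An automaton is always resetting if every rule resets a nonempty set of clocks. -/
def AlwaysResetting {A Q X : Type*} (Aut : TimedAutomaton A Q X) : Prop :=
  ∀ r ∈ Aut.rules, r.2.2.2.1 ≠ (∅ : Set X)

section Aux

variable {π : ℝ → ℝ}

lemma pi_add_int (hπ : IsTimedAutomorphism π) (x : ℝ) (z : ℤ) :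
    π (x + z) = π x + z := by
  obtain ⟨_, _, h1⟩ := hπ
  induction z using Int.induction_on with
  | zero => simp
  | succ n ih =>
      have : x + ((n : ℤ) + 1 : ℤ) = (x + (n : ℤ)) + 1 := by push_cast; ring
      rw [this, h1, ih]; push_cast; ring
  | pred n ih =>
      have h := h1 (x + (-(n : ℤ) - 1 : ℤ))
      have e : x + (-(n : ℤ) - 1 : ℤ) + 1 = x + (-(n : ℤ) : ℤ) := by push_cast; ring
      rw [e, ih] at h
      have e2 : x + (-(n : ℤ) - 1 : ℤ) = x + ((-(n : ℤ) - 1 : ℤ) : ℤ) := by push_cast; ring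
      push_cast at h ⊢
      linarith
lemma holds_iff (hπ : IsTimedAutomorphism π) (c : CmpOp) (t s : ℝ) (z : ℤ) :
    CmpOp.holds c (π t - π s) z ↔ CmpOp.holds c (t - s) z := by
  have hmono := hπ.2.1
  have hlt : π t - π s < z ↔ t - s < z := by
    constructor <;> intro h
    · have := hmono.lt_iff_lt.mp (show π t < π (s + z) by rw [pi_add_int hπ s z]; linarith)
      linarith
    · have : π t < π (s + z) := hmono (by linarith)
      rw [pi_add_int hπ s z] at this; linarith
  have hgt : (z : ℝ) < π t - π s ↔ (z : ℝ) < t - s := by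
    constructor <;> intro h
    · have := hmono.lt_iff_lt.mp (show π (s + z) < π t by rw [pi_add_int hπ s z]; linarith)
      linarith
    · have : π (s + z) < π t := hmono (by linarith)
      rw [pi_add_int hπ s z] at this; linarith
  have heq : π t - π s = z ↔ t - s = z := by
    constructor <;> intro h
    · have : π t = π (s + z) := by rw [pi_add_int hπ s z]; linarith
      have := hπ.1.1 this; linarith
    · have : t = s + z := by linarith
      have : π t = π (s + z) := by rw [this]
      rw [pi_add_int hπ s z] at this; linarith
  cases c with
  | lt => exact hlt
  | le =>
      show π t - π s ≤ z ↔ t - s ≤ z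
      simp only [← not_lt]; exact not_congr hgt
  | eq => exact heq
  | ge =>
      show π t - π s ≥ z ↔ t - s ≥ z
      simp only [ge_iff_le, ← not_lt]; exact not_congr hlt
  | gt => exact hgt

lemma sat_iff {X : Type*} (hπ : IsTimedAutomorphism π) (μ : X → ℝ) (t : ℝ)
    (φ : ClockConstraint X) :
    ClockConstraint.sat (fun x => π t - π (μ x)) φ ↔
      ClockConstraint.sat (fun x => t - μ x) φ := by
  induction φ with
  | tt => simp [ClockConstraint.sat]
  | ff => simp [ClockConstraint.sat]
  | diff x y c z =>
      show CmpOp.holds c ((π t - π (μ x)) - (π t - π (μ y))) z ↔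
        CmpOp.holds c ((t - μ x) - (t - μ y)) z
      have e1 : (π t - π (μ x)) - (π t - π (μ y)) = π (μ y) - π (μ x) := by ring
      have e2 : (t - μ x) - (t - μ y) = μ y - μ x := by ring
      rw [e1, e2]; exact holds_iff hπ c _ _ z
  | single x c z => exact holds_iff hπ c t (μ x) z
  | not φ ih => simp [ClockConstraint.sat, ih]
  | and φ ψ ih1 ih2 => simp [ClockConstraint.sat, ih1, ih2]
  | or φ ψ ih1 ih2 => simp [ClockConstraint.sat, ih1, ih2]

/-- Image of a configuration under a real map. -/
def mapConf {Q X : Type*} (π : ℝ → ℝ) (c : TAConfig Q X) : TAConfig Q X :=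
  (c.1, fun x => π (c.2.1 x), π c.2.2)

lemma step_map {A Q X : Type*} {Aut : TimedAutomaton A Q X}
    (hπ : IsTimedAutomorphism π) {c c' : TAConfig Q X} {e : A × ℝ}
    (h : Aut.Step c e c') :
    Aut.Step (mapConf π c) (e.1, π e.2) (mapConf π c') := by
  obtain ⟨h1, h2, φ, Y, hr, hsat, hres, hkeep⟩ := h
  refine ⟨by simp [mapConf, h1], hπ.2.1.le_iff_le.2 h2, φ, Y, hr, ?_, ?_, ?_⟩
  · exact (sat_iff hπ c.2.1 e.2 φ).2 hsat
  · intro x hx; simp [mapConf, hres x hx]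
  · intro x hx; simp [mapConf, hkeep x hx]

lemma run_map {A Q X : Type*} {Aut : TimedAutomaton A Q X}
    (hπ : IsTimedAutomorphism π) {c c' : TAConfig Q X} {w : List (A × ℝ)}
    (h : Aut.Run c w c') :
    Aut.Run (mapConf π c) (mapTW π w) (mapConf π c') := by
  induction h with
  | nil c => exact TimedAutomaton.Run.nil _
  | cons hs _ ih => exact TimedAutomaton.Run.cons (step_map hπ hs) ih

lemma inv_auto {S : Set ℝ} (hπ : IsSTimedAutomorphism S π) :
    ∃ σ : ℝ → ℝ, IsSTimedAutomorphism S σ ∧ (∀ x, π (σ x) = x) ∧ (∀ x, σ (π x) = x) := by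
  obtain ⟨⟨hbij, hmono, h1⟩, hfix⟩ := hπ
  let e := Equiv.ofBijective π hbij
  have hps : ∀ y, π (e.symm y) = y := fun y => e.apply_symm_apply y
  have hsp : ∀ y, e.symm (π y) = y := fun y => e.symm_apply_apply y
  refine ⟨e.symm, ⟨⟨e.symm.bijective, ?_, ?_⟩, ?_⟩, hps, hsp⟩
  · intro a b hab
    by_contra hc
    push_neg at hc
    have := hmono.le_iff_le.2 hc
    rw [hps, hps] at this
    exact absurd hab (not_lt.2 this)
  · intro x
    apply hbij.1
    rw [h1, hps, hps]
  · intro t ht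
    apply hbij.1
    rw [hps, hfix t ht]

lemma lang_inv {A Q X : Type*} (Aut : TimedAutomaton A Q X)
    (p : Q) (μ : X → ℝ) (now : ℝ) (π : ℝ → ℝ)
    (hπ : IsSTimedAutomorphism (Set.range μ ∪ {now}) π) :
    mapTW π '' Aut.LangFrom (p, μ, now) = Aut.LangFrom (p, μ, now) := by
  have key : ∀ τ : ℝ → ℝ, IsSTimedAutomorphism (Set.range μ ∪ {now}) τ →
      ∀ w ∈ Aut.LangFrom (p, μ, now), mapTW τ w ∈ Aut.LangFrom (p, μ, now) := by
    intro τ hτ w hw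
    obtain ⟨c', hrun, hfin⟩ := hw
    have hconf : mapConf τ ((p, μ, now) : TAConfig Q X) = (p, μ, now) := by
      simp only [mapConf]
      refine Prod.ext rfl (Prod.ext ?_ ?_)
      · funext x; exact hτ.2 (μ x) (Or.inl ⟨x, rfl⟩)
      · exact hτ.2 now (Or.inr rfl)
    have := run_map hτ.1 hrun
    rw [hconf] at this
    exact ⟨mapConf τ c', this, hfin⟩
  obtain ⟨σ, hσ, hπσ, hσπ⟩ := inv_auto hπ
  apply Set.Subset.antisymm
  · rintro _ ⟨w, hw, rfl⟩
    exact key π hπ w hw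
  · intro w hw
    refine ⟨mapTW σ w, key σ hσ w hw, ?_⟩
    have hco : ((fun q : A × ℝ => (q.1, π q.2)) ∘ fun q : A × ℝ => (q.1, σ q.2)) = id := by
      funext q; simp [Function.comp, hπσ]
    simp only [mapTW, List.map_map, hco, List.map_id]

lemma run_now_mem {A Q X : Type*} {Aut : TimedAutomaton A Q X}
    (hAR : AlwaysResetting Aut) {c c' : TAConfig Q X} {w : List (A × ℝ)}
    (h : Aut.Run c w c') (h0 : c.2.2 ∈ Set.range c.2.1) :
    c'.2.2 ∈ Set.range c'.2.1 := by
  induction h with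
  | nil c => exact h0
  | cons hs _ ih =>
      apply ih
      obtain ⟨h1, h2, φ, Y, hr, hsat, hres, hkeep⟩ := hs
      have hY : Y ≠ ∅ := hAR _ hr
      obtain ⟨x, hx⟩ := Set.nonempty_iff_ne_empty.2 hY
      exact ⟨x, by rw [hres x hx, h1]⟩

end Aux

/-- The language of a configuration `(p, μ, now)` is `(μ(X) ∪ {now})`-invariant;
moreover, if the automaton is always resetting, then every reachable configuration
satisfies `now ∈ μ(X)`, and hence its language is `μ(X)`-invariant. -/
theorem lang_of_configuration_invariant
    {A Q X : Type*} [Nonempty X] (Aut : TimedAutomaton A Q X) :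
    (∀ (p : Q) (μ : X → ℝ) (now : ℝ),
      ∀ π, IsSTimedAutomorphism (Set.range μ ∪ {now}) π →
        mapTW π '' Aut.LangFrom (p, μ, now) = Aut.LangFrom (p, μ, now)) ∧
    (AlwaysResetting Aut →
      ∀ (p : Q) (μ : X → ℝ) (now : ℝ), Aut.Reachable (p, μ, now) →
        now ∈ Set.range μ ∧
        ∀ π, IsSTimedAutomorphism (Set.range μ) π →
          mapTW π '' Aut.LangFrom (p, μ, now) = Aut.LangFrom (p, μ, now)) := by
  constructor
  · intro p μ now π hπ
    exact lang_inv Aut p μ now π hπ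
  · intro hAR p μ now hreach
    obtain ⟨q, hq, w, hrun⟩ := hreach
    have hnow : now ∈ Set.range μ := by
      have := run_now_mem hAR hrun ⟨Classical.arbitrary X, rfl⟩
      exact this
    refine ⟨hnow, fun π hπ => ?_⟩
    apply lang_inv Aut p μ now π
    refine ⟨hπ.1, fun t ht => ?_⟩
    rcases ht with ht | ht
    · exact hπ.2 t ht
    · rw [Set.mem_singleton_iff] at ht; rw [ht]; exact hπ.2 now hnow
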